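/- Let G be a graph and v a vertex of G. Then the intersection of the ideals P_T(G) over all subsets T ⊆ V(G) with v ∈ T equals (x_v, y_v) + J_{G−v}, where G − v is the induced subgraph of G on V(G)\{v} and J_{G−v} is regarded as an ideal of S. -/

import Mathlib

/-- The graph obtained from `G` by removing all edges meeting `T`.  Vertices of `T` become
isolated, and the connected components of vertices outside of `T` are exactly the connected
components of the induced subgraph `G - T`; in particular two vertices `u, w ∉ T` lie in the
same connected component of `G - T` iff they are reachable in `G.avoid T`. -/
def SimpleGraph.avoid {V : Type*} (G : SimpleGraph V) (T : Set V) : SimpleGraph V where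
  Adj u w := G.Adj u w ∧ u ∉ T ∧ w ∉ T
  symm := ⟨fun _ _ h => ⟨h.1.symm, h.2.2, h.2.1⟩⟩
  loopless := ⟨fun u h => G.loopless.irrefl u h.1⟩

/-- The binomial `f_{ij} = x_i y_j - x_j y_i` in `S = K[x_1,…,x_n,y_1,…,y_n]`, where the
polynomial ring is realized as `MvPolynomial (V ⊕ V) K`, `x_i = X (Sum.inl i)` and
`y_i = X (Sum.inr i)`. -/
noncomputable def edgeBinomial (K : Type*) [Field K] {V : Type*} (i j : V) :
    MvPolynomial (V ⊕ V) K :=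
  MvPolynomial.X (Sum.inl i) * MvPolynomial.X (Sum.inr j) -
    MvPolynomial.X (Sum.inl j) * MvPolynomial.X (Sum.inr i)

/-- The binomial edge ideal `J_G` of a graph `G`, generated by the binomials
`f_{ij} = x_i y_j - x_j y_i` for all edges `{i,j}` of `G`. -/
noncomputable def binomialEdgeIdeal (K : Type*) [Field K] {V : Type*} (G : SimpleGraph V) :
    Ideal (MvPolynomial (V ⊕ V) K) :=
  Ideal.span {f | ∃ i j : V, G.Adj i j ∧ f = edgeBinomial K i j}

/-- The ideal `P_T(G) = (x_v, y_v : v ∈ T) + J_{K_1} + … + J_{K_{c(T)}}`, where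
`K_1, …, K_{c(T)}` are the complete graphs on the vertex sets of the connected components
of `G - T`; equivalently, it is generated by the variables `x_v, y_v` for `v ∈ T` together
with the binomials `f_{uw}` for all pairs of distinct vertices `u, w ∉ T` lying in the same
connected component of `G - T`. -/
noncomputable def primeIdealP (K : Type*) [Field K] {V : Type*} (G : SimpleGraph V)
    (T : Set V) : Ideal (MvPolynomial (V ⊕ V) K) :=
  Ideal.span
    ({f | ∃ v ∈ T, f = MvPolynomial.X (Sum.inl v) ∨ f = MvPolynomial.X (Sum.inr v)} ∪
      {f | ∃ u w : V, u ∉ T ∧ w ∉ T ∧ u ≠ w ∧ (G.avoid T).Reachable u w ∧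
        f = edgeBinomial K u w})

open MvPolynomial

namespace BEI

variable {V : Type*} {K : Type*} [Field K]

local notation "R" => MvPolynomial (V ⊕ V) K

/-- the graph `G` with the neighborhood of `v` completed -/
def Gv (G : SimpleGraph V) (v : V) : SimpleGraph V where
  Adj u w := G.Adj u w ∨ (u ≠ w ∧ G.Adj v u ∧ G.Adj v w)
  symm := ⟨fun a b h => by
    rcases h with h | ⟨h1, h2, h3⟩
    · exact Or.inl h.symm
    · exact Or.inr ⟨h1.symm, h3, h2⟩⟩
  loopless := ⟨fun a h => by
    rcases h with h | ⟨h1, _, _⟩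
    · exact G.loopless.irrefl a h
    · exact h1 rfl⟩

theorem le_Gv (G : SimpleGraph V) (v : V) : G ≤ Gv G v := fun _ _ h => Or.inl h

theorem Gv_adj_of_mem_nbhd {G : SimpleGraph V} {v a b : V} (ha : (Gv G v).Adj v a)
    (hb : (Gv G v).Adj v b) (hab : a ≠ b) : (Gv G v).Adj a b := by
  have ha' : G.Adj v a := by rcases ha with h | ⟨_, h, _⟩ <;> [exact h; exact (G.loopless.irrefl v h).elim]
  have hb' : G.Adj v b := by rcases hb with h | ⟨_, h, _⟩ <;> [exact h; exact (G.loopless.irrefl v h).elim]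
  exact Or.inr ⟨hab, ha', hb'⟩

theorem avoid_mono {G G' : SimpleGraph V} (h : G ≤ G') (T : Set V) :
    G.avoid T ≤ G'.avoid T := fun _ _ hadj => ⟨h hadj.1, hadj.2.1, hadj.2.2⟩

theorem avoid_empty (G : SimpleGraph V) : G.avoid ∅ = G := by
  ext a b; simp [SimpleGraph.avoid]

theorem avoid_union_singleton (G : SimpleGraph V) (T : Set V) (v : V) :
    G.avoid (T ∪ {v}) = (G.avoid {v}).avoid T := by
  ext a b
  simp only [SimpleGraph.avoid, Set.mem_union, Set.mem_singleton_iff]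
  tauto

theorem edgeBinomial_neg (i j : V) : edgeBinomial K i j = -edgeBinomial K j i := by
  simp only [edgeBinomial]; ring

/-- the identity `x_v f_{uw} = x_u f_{vw} - x_w f_{vu}` -/
theorem xv_mul_edgeBinomial (v u w : V) :
    X (Sum.inl v) * edgeBinomial K u w =
      X (Sum.inl u) * edgeBinomial K v w - X (Sum.inl w) * edgeBinomial K v u := by
  simp only [edgeBinomial]; ring

theorem yv_mul_edgeBinomial (v u w : V) :
    X (Sum.inr v) * edgeBinomial K u w =
      X (Sum.inr u) * edgeBinomial K v w - X (Sum.inr w) * edgeBinomial K v u := by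
  simp only [edgeBinomial]; ring

theorem edgeBinomial_mem (G : SimpleGraph V) {i j : V} (h : G.Adj i j) :
    edgeBinomial K i j ∈ binomialEdgeIdeal K G :=
  Ideal.subset_span ⟨i, j, h, rfl⟩

theorem edgeBinomial_mem_span_vars (i j : V) :
    edgeBinomial K i j ∈ Ideal.span {X (Sum.inl i), (X (Sum.inr i) : R)} := by
  have h1 : (X (Sum.inl i) : R) ∈ Ideal.span {X (Sum.inl i), (X (Sum.inr i) : R)} :=
    Ideal.subset_span (by simp)
  have h2 : (X (Sum.inr i) : R) ∈ Ideal.span {X (Sum.inl i), (X (Sum.inr i) : R)} :=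
    Ideal.subset_span (by simp)
  exact sub_mem (Ideal.mul_mem_right _ _ h1) (Ideal.mul_mem_left _ _ h2)

theorem binomialEdgeIdeal_mono {G G' : SimpleGraph V} (h : G ≤ G') :
    binomialEdgeIdeal K G ≤ binomialEdgeIdeal K G' := by
  rw [binomialEdgeIdeal, Ideal.span_le]
  rintro f ⟨i, j, hij, rfl⟩
  exact edgeBinomial_mem G' (h hij)

theorem xy_mul_mem {G : SimpleGraph V} {v u w : V} (hu : G.Adj v u) (hw : G.Adj v w) :
    X (Sum.inl v) * edgeBinomial K u w ∈ binomialEdgeIdeal K G ∧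
    X (Sum.inr v) * edgeBinomial K u w ∈ binomialEdgeIdeal K G := by
  constructor
  · rw [xv_mul_edgeBinomial]
    exact sub_mem (Ideal.mul_mem_left _ _ (edgeBinomial_mem G hw))
      (Ideal.mul_mem_left _ _ (edgeBinomial_mem G hu))
  · rw [yv_mul_edgeBinomial]
    exact sub_mem (Ideal.mul_mem_left _ _ (edgeBinomial_mem G hw))
      (Ideal.mul_mem_left _ _ (edgeBinomial_mem G hu))

section Kill

variable [DecidableEq V] (v : V)

/-- The substitution homomorphism sending `x_v, y_v` to `0` and fixing all other variables. -/
noncomputable def killv : MvPolynomial (V ⊕ V) K →ₐ[K] MvPolynomial (V ⊕ V) K :=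
  aeval fun s => if s = Sum.inl v ∨ s = Sum.inr v then 0 else X s

@[simp] theorem killv_X_inl_self : killv (K := K) v (X (Sum.inl v)) = 0 := by
  simp [killv]

@[simp] theorem killv_X_inr_self : killv (K := K) v (X (Sum.inr v)) = 0 := by
  simp [killv]

theorem killv_X_inl {u : V} (h : u ≠ v) : killv (K := K) v (X (Sum.inl u)) = X (Sum.inl u) := by
  simp [killv, h]

theorem killv_X_inr {u : V} (h : u ≠ v) : killv (K := K) v (X (Sum.inr u)) = X (Sum.inr u) := by
  simp [killv, h]

theorem killv_edgeBinomial_left (w : V) : killv (K := K) v (edgeBinomial K v w) = 0 := by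
  simp [edgeBinomial]

theorem killv_edgeBinomial_right (w : V) : killv (K := K) v (edgeBinomial K w v) = 0 := by
  simp [edgeBinomial]

theorem killv_edgeBinomial {u w : V} (hu : u ≠ v) (hw : w ≠ v) :
    killv (K := K) v (edgeBinomial K u w) = edgeBinomial K u w := by
  simp [edgeBinomial, killv_X_inl v hu, killv_X_inr v hw, killv_X_inl v hw, killv_X_inr v hu]

/-- every polynomial is congruent to its image under `killv` modulo `(x_v, y_v)` -/
theorem sub_killv_mem (f : MvPolynomial (V ⊕ V) K) :
    f - killv (K := K) v f ∈ Ideal.span {X (Sum.inl v), (X (Sum.inr v) : MvPolynomial (V ⊕ V) K)} := by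
  induction f using MvPolynomial.induction_on with
  | C a => simp [killv]
  | add f g hf hg =>
      rw [map_add]
      have : f + g - (killv (K := K) v f + killv (K := K) v g)
          = (f - killv (K := K) v f) + (g - killv (K := K) v g) := by ring
      rw [this]; exact add_mem hf hg
  | mul_X f s hf =>
      rw [map_mul]
      by_cases hs : s = Sum.inl v ∨ s = Sum.inr v
      · have h0 : killv (K := K) v (X s) = 0 := by
          rcases hs with h | h <;> subst h <;> simp
        rw [h0, mul_zero, sub_zero]
        have hX : (X s : MvPolynomial (V ⊕ V) K) ∈
            Ideal.span {X (Sum.inl v), (X (Sum.inr v) : MvPolynomial (V ⊕ V) K)} := by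
          rcases hs with h | h <;> subst h <;> exact Ideal.subset_span (by simp)
        exact Ideal.mul_mem_left _ _ hX
      · have h0 : killv (K := K) v (X s) = X s := by
          simp [killv, hs]
        rw [h0]
        have : f * X s - killv (K := K) v f * X s = (f - killv (K := K) v f) * X s := by ring
        rw [this]
        exact Ideal.mul_mem_right _ _ hf

theorem killv_eq_zero_of_mem_span {f : MvPolynomial (V ⊕ V) K}
    (hf : f ∈ Ideal.span {X (Sum.inl v), (X (Sum.inr v) : MvPolynomial (V ⊕ V) K)}) :
    killv (K := K) v f = 0 := by
  obtain ⟨a, b, rfl⟩ := Ideal.mem_span_pair.mp hf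
  simp

theorem killv_mem_span_image {s : Set (MvPolynomial (V ⊕ V) K)} {f : MvPolynomial (V ⊕ V) K}
    (hf : f ∈ Ideal.span s) : killv (K := K) v f ∈ Ideal.span ((killv (K := K) v) '' s) := by
  have := Ideal.mem_map_of_mem (killv (K := K) v).toRingHom hf
  rwa [Ideal.map_span] at this

/-- `killv` preserves the binomial edge ideal of `G - v`. -/
theorem killv_binomialEdgeIdeal {f : MvPolynomial (V ⊕ V) K} {G : SimpleGraph V}
    (hf : f ∈ binomialEdgeIdeal K (G.avoid {v})) :
    killv (K := K) v f ∈ binomialEdgeIdeal K (G.avoid {v}) := by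
  have h := killv_mem_span_image v hf
  refine Ideal.span_le.mpr ?_ h
  rintro _ ⟨g, ⟨i, j, hij, rfl⟩, rfl⟩
  have hi : i ≠ v := by rintro rfl; exact hij.2.1 rfl
  have hj : j ≠ v := by rintro rfl; exact hij.2.2 rfl
  rw [killv_edgeBinomial v hi hj]
  exact edgeBinomial_mem _ hij

end Kill

section Plemmas

variable (K)

theorem var_mem_P {G : SimpleGraph V} {T : Set V} {u : V} (hu : u ∈ T) :
    (X (Sum.inl u) : MvPolynomial (V ⊕ V) K) ∈ primeIdealP K G T ∧
    (X (Sum.inr u) : MvPolynomial (V ⊕ V) K) ∈ primeIdealP K G T :=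
  ⟨Ideal.subset_span (Or.inl ⟨u, hu, Or.inl rfl⟩),
   Ideal.subset_span (Or.inl ⟨u, hu, Or.inr rfl⟩)⟩

theorem span_vars_le_P {G : SimpleGraph V} {T : Set V} {u : V} (hu : u ∈ T) :
    Ideal.span {X (Sum.inl u), (X (Sum.inr u) : MvPolynomial (V ⊕ V) K)} ≤ primeIdealP K G T := by
  rw [Ideal.span_le]
  rintro f hf
  rcases hf with h | h
  · exact h ▸ (var_mem_P K hu).1
  · simp only [Set.mem_singleton_iff] at h
    exact h ▸ (var_mem_P K hu).2

theorem edgeBinomial_mem_P {G : SimpleGraph V} {T : Set V} {u w : V} (hu : u ∉ T) (hw : w ∉ T)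
    (hne : u ≠ w) (hr : (G.avoid T).Reachable u w) :
    edgeBinomial K u w ∈ primeIdealP K G T :=
  Ideal.subset_span (Or.inr ⟨u, w, hu, hw, hne, hr, rfl⟩)

/-- the binomial edge ideal is contained in every `P_T`. -/
theorem bei_le_P (G : SimpleGraph V) (T : Set V) :
    binomialEdgeIdeal K G ≤ primeIdealP K G T := by
  rw [binomialEdgeIdeal, Ideal.span_le]
  rintro _ ⟨i, j, hij, rfl⟩
  by_cases hi : i ∈ T
  · exact span_vars_le_P K hi (edgeBinomial_mem_span_vars i j)
  by_cases hj : j ∈ T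
  · rw [edgeBinomial_neg]
    exact neg_mem (span_vars_le_P K hj (edgeBinomial_mem_span_vars j i))
  · exact edgeBinomial_mem_P K hi hj hij.ne (SimpleGraph.Adj.reachable ⟨hij, hi, hj⟩)

theorem P_mono {G G' : SimpleGraph V} (h : G ≤ G') (T : Set V) :
    primeIdealP K G T ≤ primeIdealP K G' T := by
  rw [primeIdealP, Ideal.span_le]
  rintro f (hf | ⟨u, w, hu, hw, hne, hr, rfl⟩)
  · exact Ideal.subset_span (Or.inl hf)
  · exact edgeBinomial_mem_P K hu hw hne (hr.mono (avoid_mono h T))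

/-- In a graph where each neighborhood is a clique, reachable distinct vertices are adjacent. -/
theorem reachable_adj_of_locally_clique {G : SimpleGraph V}
    (hloc : ∀ v a b, G.Adj v a → G.Adj v b → a ≠ b → G.Adj a b) {u w : V}
    (h : G.Reachable u w) : u ≠ w → G.Adj u w := by
  obtain ⟨p⟩ := h
  induction p with
  | nil => intro hne; exact absurd rfl hne
  | @cons a b c h' p ih =>
      intro hne
      by_cases hbc : b = c
      · exact hbc ▸ h'
      · exact hloc b a c h'.symm (ih hbc) hne

/-- If every component of `G` is complete, then `P_∅ ≤ J_G`. -/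
theorem P_empty_le_bei {G : SimpleGraph V}
    (hloc : ∀ v a b, G.Adj v a → G.Adj v b → a ≠ b → G.Adj a b) :
    primeIdealP K G ∅ ≤ binomialEdgeIdeal K G := by
  rw [primeIdealP, Ideal.span_le]
  rintro f (⟨u, hu, _⟩ | ⟨u, w, _, _, hne, hr, rfl⟩)
  · exact absurd hu (Set.notMem_empty u)
  · rw [avoid_empty] at hr
    exact edgeBinomial_mem G (reachable_adj_of_locally_clique hloc hr hne)

/-- Shortcut lemma: in a graph where the neighborhood of `v` is a clique, removing `v` in
addition to `T \ {v}` does not disconnect vertices outside `T`. -/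
theorem reachable_avoid_insert {G : SimpleGraph V} {v : V} {T : Set V} (hv : v ∈ T)
    (hN : ∀ a b, G.Adj v a → G.Adj v b → a ≠ b → G.Adj a b) :
    ∀ (n : ℕ) (u w : V) (p : (G.avoid (T \ {v})).Walk u w), p.length ≤ n →
      u ∉ T → w ∉ T → (G.avoid T).Reachable u w := by
  intro n
  induction n with
  | zero =>
      intro u w p hp hu hw
      cases p with
      | nil => exact SimpleGraph.Reachable.refl u
      | cons h q => simp at hp
  | succ n ih =>
      intro u w p hp hu hw
      cases p with
      | nil => exact SimpleGraph.Reachable.refl u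
      | cons h q =>
          rename_i a
          by_cases haT : a ∈ T
          · -- then a = v
            have hav : a = v := by
              by_contra hav
              exact h.2.2 ⟨haT, hav⟩
            subst hav
            cases q with
            | nil => exact absurd hv hw
            | cons h2 r =>
                rename_i b
                have hbv : b ≠ a := fun hb => (G.loopless.irrefl a (hb ▸ h2.1)).elim
                have hbT : b ∉ T := fun hb => h2.2.2 ⟨hb, hbv⟩
                have hlen : r.length ≤ n := by
                  simp only [SimpleGraph.Walk.length_cons] at hp ⊢; omega
                have hr : (G.avoid T).Reachable b w := ih b w r hlen hbT hw
                by_cases hub : u = b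
                · exact hub ▸ hr
                · have hadj : G.Adj u b := hN u b h.1.symm h2.1 hub
                  have hadj' : (G.avoid T).Adj u b := ⟨hadj, hu, hbT⟩
                  exact hadj'.reachable.trans hr
          · have hlen : q.length ≤ n := by
              simp only [SimpleGraph.Walk.length_cons] at hp; omega
            have hadj' : (G.avoid T).Adj u a := ⟨h.1, hu, haT⟩
            exact hadj'.reachable.trans (ih a w q hlen haT hw)

/-- If the neighborhood of `v` is a clique in `G` and `v ∈ T`, then `P_{T \ {v}} ≤ P_T`. -/
theorem P_erase_le {G : SimpleGraph V} {v : V} {T : Set V} (hv : v ∈ T)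
    (hN : ∀ a b, G.Adj v a → G.Adj v b → a ≠ b → G.Adj a b) :
    primeIdealP K G (T \ {v}) ≤ primeIdealP K G T := by
  rw [primeIdealP, Ideal.span_le]
  rintro f (⟨u, hu, hf⟩ | ⟨u, w, hu, hw, hne, hr, rfl⟩)
  · rcases hf with rfl | rfl
    · exact (var_mem_P K hu.1).1
    · exact (var_mem_P K hu.1).2
  · by_cases huv : u = v
    · subst huv
      exact span_vars_le_P K hv (edgeBinomial_mem_span_vars u w)
    by_cases hwv : w = v
    · subst hwv
      rw [edgeBinomial_neg]
      exact neg_mem (span_vars_le_P K hv (edgeBinomial_mem_span_vars w u))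
    · have hu' : u ∉ T := fun h => hu ⟨h, huv⟩
      have hw' : w ∉ T := fun h => hw ⟨h, hwv⟩
      obtain ⟨p⟩ := hr
      exact edgeBinomial_mem_P K hu' hw' hne
        (reachable_avoid_insert hv hN p.length u w p le_rfl hu' hw')

end Plemmas

section Ohtani

variable [DecidableEq V]

/-- Key computation for Ohtani's lemma: for `h ∈ J_{G_v}`, the difference `h - killv h` lies
in `J_G`, and `x_v killv h`, `y_v killv h ∈ J_G`. -/
theorem claimO {G : SimpleGraph V} {v : V} {h : MvPolynomial (V ⊕ V) K}
    (hh : h ∈ binomialEdgeIdeal K (Gv G v)) :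
    h - killv (K := K) v h ∈ binomialEdgeIdeal K G ∧
    X (Sum.inl v) * killv (K := K) v h ∈ binomialEdgeIdeal K G ∧
    X (Sum.inr v) * killv (K := K) v h ∈ binomialEdgeIdeal K G := by
  rw [binomialEdgeIdeal] at hh
  refine Submodule.span_induction ?_ ?_ ?_ ?_ hh
  · rintro f ⟨i, j, hij, rfl⟩
    rcases hij with hij | ⟨hne, hi, hj⟩
    · by_cases hiv : i = v
      · subst hiv
        rw [killv_edgeBinomial_left]
        exact ⟨by simpa using edgeBinomial_mem G hij, by simp, by simp⟩
      by_cases hjv : j = v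
      · subst hjv
        rw [killv_edgeBinomial_right]
        exact ⟨by simpa using edgeBinomial_mem G hij, by simp, by simp⟩
      · rw [killv_edgeBinomial v hiv hjv]
        exact ⟨by simpa using (Submodule.zero_mem _),
          Ideal.mul_mem_left _ _ (edgeBinomial_mem G hij),
          Ideal.mul_mem_left _ _ (edgeBinomial_mem G hij)⟩
    · have hiv : i ≠ v := fun hiv => G.loopless.irrefl v (hiv ▸ hi)
      have hjv : j ≠ v := fun hjv => G.loopless.irrefl v (hjv ▸ hj)
      rw [killv_edgeBinomial v hiv hjv]
      exact ⟨by simpa using (Submodule.zero_mem _), (xy_mul_mem hi hj).1, (xy_mul_mem hi hj).2⟩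
  · simp
  · rintro f g - - ⟨h1, h2, h3⟩ ⟨h1', h2', h3'⟩
    rw [map_add]
    refine ⟨?_, ?_, ?_⟩
    · have : f + g - (killv (K := K) v f + killv (K := K) v g)
        = (f - killv (K := K) v f) + (g - killv (K := K) v g) := by ring
      rw [this]; exact add_mem h1 h1'
    · rw [mul_add]; exact add_mem h2 h2'
    · rw [mul_add]; exact add_mem h3 h3'
  · rintro c f - ⟨h1, h2, h3⟩
    rw [smul_eq_mul, map_mul]
    have hc : c - killv (K := K) v c ∈
        Ideal.span {X (Sum.inl v), (X (Sum.inr v) : MvPolynomial (V ⊕ V) K)} :=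
      sub_killv_mem v c
    obtain ⟨a, b, hab⟩ := Ideal.mem_span_pair.mp hc
    refine ⟨?_, ?_, ?_⟩
    · have key : c * f - killv (K := K) v c * killv (K := K) v f
          = c * (f - killv (K := K) v f) + (c - killv (K := K) v c) * killv (K := K) v f := by
        ring
      rw [key, ← hab]
      have : (a * X (Sum.inl v) + b * X (Sum.inr v)) * killv (K := K) v f
          = a * (X (Sum.inl v) * killv (K := K) v f) + b * (X (Sum.inr v) * killv (K := K) v f) := by
        ring
      rw [this]
      exact add_mem (Ideal.mul_mem_left _ _ h1)
        (add_mem (Ideal.mul_mem_left _ _ h2) (Ideal.mul_mem_left _ _ h3))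
    · have : X (Sum.inl v) * (killv (K := K) v c * killv (K := K) v f)
          = killv (K := K) v c * (X (Sum.inl v) * killv (K := K) v f) := by ring
      rw [this]; exact Ideal.mul_mem_left _ _ h2
    · have : X (Sum.inr v) * (killv (K := K) v c * killv (K := K) v f)
          = killv (K := K) v c * (X (Sum.inr v) * killv (K := K) v f) := by ring
      rw [this]; exact Ideal.mul_mem_left _ _ h3

/-- Ohtani's lemma, hard inclusion. -/
theorem ohtani {G : SimpleGraph V} {v : V} {f : MvPolynomial (V ⊕ V) K}
    (h1 : f ∈ binomialEdgeIdeal K (Gv G v))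
    (h2 : f ∈ Ideal.span {X (Sum.inl v), (X (Sum.inr v) : MvPolynomial (V ⊕ V) K)} ⊔
      binomialEdgeIdeal K (G.avoid {v})) :
    f ∈ binomialEdgeIdeal K G := by
  obtain ⟨a, ha, g, hg, rfl⟩ := Submodule.mem_sup.mp h2
  have hsub : (a + g) - killv (K := K) v (a + g) ∈ binomialEdgeIdeal K G := (claimO h1).1
  have hka : killv (K := K) v a = 0 := killv_eq_zero_of_mem_span v ha
  have hkg : killv (K := K) v g ∈ binomialEdgeIdeal K (G.avoid {v}) := killv_binomialEdgeIdeal v hg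
  have havle : binomialEdgeIdeal K (G.avoid {v}) ≤ binomialEdgeIdeal K G :=
    binomialEdgeIdeal_mono (fun _ _ hadj => hadj.1)
  have : a + g = ((a + g) - killv (K := K) v (a + g)) + killv (K := K) v g := by
    rw [map_add, hka, zero_add]; ring
  rw [this]
  exact add_mem hsub (havle hkg)

end Ohtani

section Measure

variable [Fintype V]

/-- number of non-isolated vertices -/
noncomputable def nA (G : SimpleGraph V) : ℕ := {v : V | ∃ u, G.Adj v u}.ncard

/-- number of ordered non-adjacent pairs of distinct vertices -/
noncomputable def nB (G : SimpleGraph V) : ℕ :=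
  {p : V × V | p.1 ≠ p.2 ∧ ¬ G.Adj p.1 p.2}.ncard

noncomputable def mu (G : SimpleGraph V) : ℕ := nA G * (Nat.card (V × V) + 1) + nB G

theorem nB_le (G : SimpleGraph V) : nB G ≤ Nat.card (V × V) := by
  rw [← Set.ncard_univ]
  exact Set.ncard_le_ncard (Set.subset_univ _) (Set.toFinite _)

theorem mu_avoid_lt {G : SimpleGraph V} {v u : V} (h : G.Adj v u) :
    mu (G.avoid {v}) < mu G := by
  have hA : nA (G.avoid {v}) < nA G := by
    apply Set.ncard_lt_ncard _ (Set.toFinite _)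
    constructor
    · rintro a ⟨b, hb⟩
      exact ⟨b, hb.1⟩
    · intro hsub
      obtain ⟨b, hb⟩ := hsub ⟨u, h⟩
      exact hb.2.1 rfl
  calc mu (G.avoid {v}) = nA (G.avoid {v}) * (Nat.card (V × V) + 1) + nB (G.avoid {v}) := rfl
    _ ≤ nA (G.avoid {v}) * (Nat.card (V × V) + 1) + Nat.card (V × V) := by
        exact Nat.add_le_add_left (nB_le _) _
    _ < (nA (G.avoid {v}) + 1) * (Nat.card (V × V) + 1) := by ring_nf; omega
    _ ≤ nA G * (Nat.card (V × V) + 1) := Nat.mul_le_mul_right _ hA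
    _ ≤ mu G := Nat.le_add_right _ _

theorem mu_Gv_lt {G : SimpleGraph V} {v u w : V} (hu : G.Adj v u) (hw : G.Adj v w)
    (huw : u ≠ w) (hnadj : ¬ G.Adj u w) : mu (Gv G v) < mu G := by
  have hA : nA (Gv G v) = nA G := by
    unfold nA
    congr 1
    ext a
    constructor
    · rintro ⟨b, hb | ⟨_, h1, _⟩⟩
      · exact ⟨b, hb⟩
      · exact ⟨v, h1.symm⟩
    · rintro ⟨b, hb⟩
      exact ⟨b, Or.inl hb⟩
  have hB : nB (Gv G v) < nB G := by
    apply Set.ncard_lt_ncard _ (Set.toFinite _)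
    constructor
    · rintro ⟨a, b⟩ ⟨hne, hnadj'⟩
      exact ⟨hne, fun hadj => hnadj' (Or.inl hadj)⟩
    · intro hsub
      have hmem : ((u, w) : V × V) ∈ {p : V × V | p.1 ≠ p.2 ∧ ¬ G.Adj p.1 p.2} := ⟨huw, hnadj⟩
      obtain ⟨-, hn⟩ := hsub hmem
      exact hn (Or.inr ⟨huw, hu, hw⟩)
  unfold mu
  rw [hA]
  omega

end Measure

section Main

variable [Fintype V] [DecidableEq V] (K)

/-- Transfer of membership in `P_{T ∪ {v}}(G)` to `P_T(G - v)` under `killv`. -/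
theorem killv_mem_P {G : SimpleGraph V} {v : V} {T : Set V} {f : MvPolynomial (V ⊕ V) K}
    (hf : f ∈ primeIdealP K G (T ∪ {v})) :
    killv (K := K) v f ∈ primeIdealP K (G.avoid {v}) T := by
  rw [primeIdealP] at hf
  have h := killv_mem_span_image v hf
  refine Ideal.span_le.mpr ?_ h
  rintro _ ⟨g, hg, rfl⟩
  rcases hg with ⟨u, hu, hgu⟩ | ⟨u, w, hu, hw, hne, hr, rfl⟩
  · by_cases huv : u = v
    · subst huv
      rcases hgu with rfl | rfl <;> simp
    · have huT : u ∈ T := hu.resolve_right huv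
      rcases hgu with rfl | rfl
      · rw [killv_X_inl v huv]; exact (var_mem_P K huT).1
      · rw [killv_X_inr v huv]; exact (var_mem_P K huT).2
  · have huv : u ≠ v := fun h => hu (h ▸ Or.inr rfl)
    have hwv : w ≠ v := fun h => hw (h ▸ Or.inr rfl)
    have huT : u ∉ T := fun h => hu (Or.inl h)
    have hwT : w ∉ T := fun h => hw (Or.inl h)
    rw [killv_edgeBinomial v huv hwv]
    rw [avoid_union_singleton] at hr
    exact edgeBinomial_mem_P K huT hwT hne hr

/-- Given the decomposition theorem for `G - v`, any element of all `P_T(G)` with `v ∈ T`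
lies in `(x_v, y_v) + J_{G - v}`. -/
theorem mem_sup_of_forall_P {G : SimpleGraph V} {v : V}
    (hfull : (⨅ T : Set V, primeIdealP K (G.avoid {v}) T) = binomialEdgeIdeal K (G.avoid {v}))
    {f : MvPolynomial (V ⊕ V) K} (hf : ∀ T : Set V, v ∈ T → f ∈ primeIdealP K G T) :
    f ∈ Ideal.span {X (Sum.inl v), (X (Sum.inr v) : MvPolynomial (V ⊕ V) K)} ⊔
      binomialEdgeIdeal K (G.avoid {v}) := by
  have h1 : f - killv (K := K) v f ∈
      Ideal.span {X (Sum.inl v), (X (Sum.inr v) : MvPolynomial (V ⊕ V) K)} := sub_killv_mem v f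
  have h2 : killv (K := K) v f ∈ binomialEdgeIdeal K (G.avoid {v}) := by
    rw [← hfull]
    refine Submodule.mem_iInf _ |>.mpr fun T => ?_
    exact killv_mem_P K (hf (T ∪ {v}) (Or.inr rfl))
  have := Submodule.add_mem_sup h1 h2
  rwa [sub_add_cancel] at this

/-- The full decomposition theorem: `⋂_T P_T(G) = J_G`. -/
theorem full_decomposition (G : SimpleGraph V) :
    (⨅ T : Set V, primeIdealP K G T) = binomialEdgeIdeal K G := by
  generalize hn : mu G = n
  induction n using Nat.strong_induction_on generalizing G with
  | _ n ih =>
    refine le_antisymm ?_ (le_iInf fun T => bei_le_P K G T)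
    by_cases hloc : ∀ v a b, G.Adj v a → G.Adj v b → a ≠ b → G.Adj a b
    · exact le_trans (iInf_le _ ∅) (P_empty_le_bei K hloc)
    · push_neg at hloc
      obtain ⟨v, u, w, hu, hw, huw, hnadj⟩ := hloc
      intro f hf
      rw [Submodule.mem_iInf] at hf
      -- f ∈ J_{G_v}
      have hfull_Gv : (⨅ T : Set V, primeIdealP K (Gv G v) T) = binomialEdgeIdeal K (Gv G v) :=
        ih _ (hn ▸ mu_Gv_lt hu hw huw hnadj) _ rfl
      have hGv : f ∈ binomialEdgeIdeal K (Gv G v) := by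
        rw [← hfull_Gv, Submodule.mem_iInf]
        intro T
        by_cases hv : v ∈ T
        · refine P_erase_le K hv (fun a b => Gv_adj_of_mem_nbhd) ?_
          exact P_mono K (le_Gv G v) _ (hf (T \ {v}))
        · exact P_mono K (le_Gv G v) T (hf T)
      -- f ∈ (x_v, y_v) + J_{G - v}
      have hfull_av : (⨅ T : Set V, primeIdealP K (G.avoid {v}) T)
          = binomialEdgeIdeal K (G.avoid {v}) :=
        ih _ (hn ▸ mu_avoid_lt hu) _ rfl
      have hsup := mem_sup_of_forall_P K hfull_av (fun T _ => hf T)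
      exact ohtani hGv hsup

end Main

end BEI

/-- Let `G` be a graph and `v` a vertex of `G`.  Then the intersection of the ideals
`P_T(G)` over all subsets `T ⊆ V(G)` with `v ∈ T` equals `(x_v, y_v) + J_{G - v}`, where
`G - v` is the induced subgraph of `G` on `V(G) \ {v}` and `J_{G - v}` is regarded as an
ideal of `S`. -/
theorem inf_primeIdealP_eq {V K : Type*} [Fintype V] [Field K] (G : SimpleGraph V) (v : V) :
    (⨅ T ∈ {T : Set V | v ∈ T}, primeIdealP K G T) =
      Ideal.span {MvPolynomial.X (Sum.inl v), MvPolynomial.X (Sum.inr v)} ⊔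
        binomialEdgeIdeal K (G.avoid {v}) := by
  classical
  refine le_antisymm ?_ ?_
  · intro f hf
    simp only [Submodule.mem_iInf] at hf
    exact BEI.mem_sup_of_forall_P K (BEI.full_decomposition K (G.avoid {v}))
      (fun T hT => hf T hT)
  · refine le_iInf fun T => le_iInf fun hT => sup_le ?_ ?_
    · exact BEI.span_vars_le_P K hT
    · rw [binomialEdgeIdeal, Ideal.span_le]
      rintro _ ⟨i, j, hij, rfl⟩
      obtain ⟨hadj, hi, hj⟩ := hij
      by_cases hiT : i ∈ T
      · exact BEI.span_vars_le_P K hiT (BEI.edgeBinomial_mem_span_vars i j)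
      by_cases hjT : j ∈ T
      · rw [BEI.edgeBinomial_neg]
        exact neg_mem (BEI.span_vars_le_P K hjT (BEI.edgeBinomial_mem_span_vars j i))
      · exact BEI.edgeBinomial_mem_P K hiT hjT hadj.ne
          (SimpleGraph.Adj.reachable ⟨hadj, hiT, hjT⟩)
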